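/- Let V̂ : ℤ³ → [0,∞) with Σ_{ℓ∈ℤ³∖{0}} V̂(ℓ) < ∞. Then there exists a constant C > 0 such that for all k_F ≥ 1 and all q ∈ B_F^c: |n^{RPA}(q)| ≤ C · k_F^{-1} · e(q)^{-1}. The same bound holds for q ∈ B_F when n^{RPA}(q) is defined by the interior formula, obtained by replacing 1_{L_ℓ}(q) by 1_{L_ℓ}(q+ℓ) and λ_{ℓ,q} by λ_{ℓ,q+ℓ}. -/

import Mathlib

open scoped BigOperators
open MeasureTheory

noncomputable section

attribute [local instance] Classical.propDecidable

/-- The momentum lattice `ℤ³`. -/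
abbrev Z3 : Type := Fin 3 → ℤ

/-- Squared Euclidean norm `|p|²` of an integer vector, as a real number. -/
def nsq (p : Z3) : ℝ := ∑ i, ((p i : ℝ)) ^ 2

/-- The Fermi ball `B_F = {k ∈ ℤ³ : |k| ≤ k_F}`. -/
def BF (kF : ℝ) : Set Z3 := {k | nsq k ≤ kF ^ 2}

/-- The lens `L_ℓ = B_F^c ∩ (B_F + ℓ)`. -/
def lens (kF : ℝ) (ℓ : Z3) : Set Z3 := {p | p ∉ BF kF ∧ p - ℓ ∈ BF kF}

/-- The excitation energy `λ_{ℓ,p} = (|p|² − |p−ℓ|²)/2`. -/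
def lam (ℓ p : Z3) : ℝ := (nsq p - nsq (p - ℓ)) / 2

/-- The energy gap `e(q) = | |q|² − min_{p ∈ B_F^c} |p|² + 1/2 |`. -/
def efun (kF : ℝ) (q : Z3) : ℝ := |nsq q - sInf (nsq '' (BF kF)ᶜ) + 1 / 2|

/-- The coupling coefficient `g_ℓ = k_F⁻¹ V̂(ℓ) / (2(2π)³)`. -/
def gcoef (kF : ℝ) (V : Z3 → ℝ) (ℓ : Z3) : ℝ := kF⁻¹ * V ℓ / (2 * (2 * Real.pi) ^ 3)

/-- The random phase approximation contribution `n^{RPA}(q)` (Eq. `eq:nqb`). -/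
def nRPA (kF : ℝ) (V : Z3 → ℝ) (q : Z3) : ℝ :=
  ∑' ℓ : Z3, if ℓ ≠ 0 ∧ q ∈ lens kF ℓ then
    (1 / Real.pi) * ∫ t in Set.Ioi (0 : ℝ),
      (gcoef kF V ℓ * (t ^ 2 - (lam ℓ q) ^ 2) * (((t ^ 2 + (lam ℓ q) ^ 2) ^ 2)⁻¹)) /
        (1 + 2 * gcoef kF V ℓ *
          ∑' p : Z3, if p ∈ lens kF ℓ then lam ℓ p * (t ^ 2 + (lam ℓ p) ^ 2)⁻¹ else 0)
  else 0

/-- The interior (`q ∈ B_F`) variant of `n^{RPA}(q)` (Eq. `eq:inside`), obtained by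
replacing `1_{L_ℓ}(q)` by `1_{L_ℓ}(q+ℓ)` and `λ_{ℓ,q}` by `λ_{ℓ,q+ℓ}`. -/
def nRPAin (kF : ℝ) (V : Z3 → ℝ) (q : Z3) : ℝ :=
  ∑' ℓ : Z3, if ℓ ≠ 0 ∧ q + ℓ ∈ lens kF ℓ then
    (1 / Real.pi) * ∫ t in Set.Ioi (0 : ℝ),
      (gcoef kF V ℓ * (t ^ 2 - (lam ℓ (q + ℓ)) ^ 2) * (((t ^ 2 + (lam ℓ (q + ℓ)) ^ 2) ^ 2)⁻¹)) /
        (1 + 2 * gcoef kF V ℓ *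
          ∑' p : Z3, if p ∈ lens kF ℓ then lam ℓ p * (t ^ 2 + (lam ℓ p) ^ 2)⁻¹ else 0)
  else 0

open Real Set

lemma intOn_aux (b : ℝ) (hb : 0 < b) :
    IntegrableOn (fun t : ℝ => (t ^ 2 + b ^ 2)⁻¹) (Set.Ioi 0) := by
  have hmin : 0 < min 1 (b ^ 2) := lt_min one_pos (by positivity)
  have h : Integrable (fun t : ℝ => (min 1 (b ^ 2))⁻¹ * (1 + t ^ 2)⁻¹) :=
    integrable_inv_one_add_sq.const_mul _
  have hc : Continuous (fun t : ℝ => (t ^ 2 + b ^ 2)⁻¹) := by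
    exact Continuous.inv₀ (by continuity) (fun t => by positivity)
  have : Integrable (fun t : ℝ => (t ^ 2 + b ^ 2)⁻¹) := by
    refine h.mono' hc.aestronglyMeasurable ?_
    filter_upwards with t
    rw [Real.norm_eq_abs, abs_of_nonneg (by positivity), ← mul_inv]
    apply inv_anti₀ (by positivity)
    calc min 1 (b ^ 2) * (1 + t ^ 2) = min 1 (b ^ 2) + min 1 (b ^ 2) * t ^ 2 := by ring
      _ ≤ b ^ 2 + 1 * t ^ 2 := by
          gcongr; · exact min_le_right _ _
          · exact min_le_left _ _
      _ = t ^ 2 + b ^ 2 := by ring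
  exact this.integrableOn

lemma int_aux (b : ℝ) (hb : 0 < b) :
    ∫ t in Set.Ioi (0 : ℝ), (t ^ 2 + b ^ 2)⁻¹ = π / (2 * b) := by
  have hderiv : ∀ x ∈ Ici (0:ℝ), HasDerivAt (fun t => b⁻¹ * arctan (t / b))
      ((x ^ 2 + b ^ 2)⁻¹) x := by
    intro x _
    have h1 : HasDerivAt (fun t : ℝ => t / b) (1 / b) x := (hasDerivAt_id x).div_const b
    have h2 := (Real.hasDerivAt_arctan (x / b)).comp x h1
    have h3 := h2.const_mul b⁻¹
    refine h3.congr_deriv ?_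
    field_simp
    ring
  have htend : Filter.Tendsto (fun t => b⁻¹ * arctan (t / b)) Filter.atTop
      (nhds (b⁻¹ * (π / 2))) := by
    apply Filter.Tendsto.const_mul
    have : Filter.Tendsto (fun t : ℝ => t / b) Filter.atTop Filter.atTop :=
      Filter.tendsto_id.atTop_div_const hb
    exact (tendsto_arctan_atTop.comp this).mono_right nhdsWithin_le_nhds
  have := integral_Ioi_of_hasDerivAt_of_tendsto' hderiv (intOn_aux b hb) htend
  rw [this]
  simp [Real.arctan_zero]
  rw [inv_mul_eq_div, div_div]

lemma nsq_cast (p : Z3) : nsq p = ((∑ i, (p i) ^ 2 : ℤ) : ℝ) := by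
  simp [nsq]

lemma nsq_nonneg (p : Z3) : 0 ≤ nsq p := Finset.sum_nonneg fun i _ => sq_nonneg _

lemma nsq_add_one_le (p r : Z3) (h : nsq p < nsq r) : nsq p + 1 ≤ nsq r := by
  rw [nsq_cast p, nsq_cast r] at *
  have : (∑ i, (p i) ^ 2 : ℤ) < ∑ i, (r i) ^ 2 := by exact_mod_cast h
  have : (∑ i, (p i) ^ 2 : ℤ) + 1 ≤ ∑ i, (r i) ^ 2 := this
  exact_mod_cast this

lemma bddBelow_aux (kF : ℝ) : BddBelow (nsq '' (BF kF)ᶜ) := by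
  refine ⟨0, fun s hs => ?_⟩
  obtain ⟨r, _, rfl⟩ := hs
  exact nsq_nonneg r

lemma nonempty_aux (kF : ℝ) (hkF : 1 ≤ kF) : (nsq '' (BF kF)ᶜ).Nonempty := by
  set c : ℤ := ⌈kF⌉ + 1
  refine ⟨nsq (fun _ => c), (fun _ => c), ?_, rfl⟩
  simp only [Set.mem_compl_iff, BF, Set.mem_setOf_eq, not_le]
  have hc : kF + 1 ≤ (c : ℝ) := by
    have := Int.le_ceil kF
    push_cast [c]
    linarith
  have hk : 0 < kF := lt_of_lt_of_le one_pos hkF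
  have h1 : kF ^ 2 < (c : ℝ) ^ 2 := by nlinarith
  have : nsq (fun _ => c) = 3 * (c : ℝ) ^ 2 := by
    simp [nsq, Fin.sum_univ_three]
  rw [this]; nlinarith

lemma csInf_le_nsq (kF : ℝ) (q : Z3) (hq : q ∉ BF kF) :
    sInf (nsq '' (BF kF)ᶜ) ≤ nsq q :=
  csInf_le (bddBelow_aux kF) ⟨q, hq, rfl⟩

lemma nsq_add_one_le_csInf (kF : ℝ) (hkF : 1 ≤ kF) (p : Z3) (hp : p ∈ BF kF) :
    nsq p + 1 ≤ sInf (nsq '' (BF kF)ᶜ) := by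
  refine le_csInf (nonempty_aux kF hkF) ?_
  rintro s ⟨r, hr, rfl⟩
  refine nsq_add_one_le p r ?_
  have h1 : nsq p ≤ kF ^ 2 := hp
  have h2 : ¬ (nsq r ≤ kF ^ 2) := hr
  linarith [not_le.mp h2]

lemma lam_nonneg_of_lens (kF : ℝ) (ℓ p : Z3) (hp : p ∈ lens kF ℓ) : 0 ≤ lam ℓ p := by
  obtain ⟨h1, h2⟩ := hp
  have h1' : kF ^ 2 < nsq p := not_le.mp h1
  have h2' : nsq (p - ℓ) ≤ kF ^ 2 := h2
  unfold lam; linarith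

lemma per_term (kF : ℝ) (V : Z3 → ℝ) (hV : ∀ ℓ : Z3, 0 ≤ V ℓ) (hkF : 1 ≤ kF)
    (ℓ q' : Z3) (e0 : ℝ) (he : 0 < e0) (hle : e0 ≤ 2 * lam ℓ q') :
    |(1 / Real.pi) * ∫ t in Set.Ioi (0 : ℝ),
      (gcoef kF V ℓ * (t ^ 2 - (lam ℓ q') ^ 2) * (((t ^ 2 + (lam ℓ q') ^ 2) ^ 2)⁻¹)) /
        (1 + 2 * gcoef kF V ℓ *
          ∑' p : Z3, if p ∈ lens kF ℓ then lam ℓ p * (t ^ 2 + (lam ℓ p) ^ 2)⁻¹ else 0)|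
      ≤ gcoef kF V ℓ / e0 := by
  have hk : (0:ℝ) < kF := lt_of_lt_of_le one_pos hkF
  have hg : 0 ≤ gcoef kF V ℓ := by
    unfold gcoef
    apply div_nonneg (mul_nonneg (inv_nonneg.2 hk.le) (hV ℓ))
    positivity
  set g := gcoef kF V ℓ with hgdef
  set b := lam ℓ q' with hbdef
  have hb : 0 < b := by linarith
  set D : ℝ → ℝ := fun t => 1 + 2 * g *
    ∑' p : Z3, if p ∈ lens kF ℓ then lam ℓ p * (t ^ 2 + (lam ℓ p) ^ 2)⁻¹ else 0 with hDdef
  have hD : ∀ t, 1 ≤ D t := by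
    intro t
    have hS : 0 ≤ ∑' p : Z3, if p ∈ lens kF ℓ then lam ℓ p * (t ^ 2 + (lam ℓ p) ^ 2)⁻¹ else 0 := by
      apply tsum_nonneg
      intro p
      split_ifs with hp
      · exact mul_nonneg (lam_nonneg_of_lens kF ℓ p hp) (by positivity)
      · exact le_refl 0
    show (1:ℝ) ≤ 1 + 2 * g * ∑' p : Z3, if p ∈ lens kF ℓ then lam ℓ p * (t ^ 2 + (lam ℓ p) ^ 2)⁻¹ else 0
    nlinarith
  have key : ‖∫ t in Set.Ioi (0 : ℝ),
      (g * (t ^ 2 - b ^ 2) * (((t ^ 2 + b ^ 2) ^ 2)⁻¹)) / D t‖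
      ≤ ∫ t in Set.Ioi (0 : ℝ), g * (t ^ 2 + b ^ 2)⁻¹ := by
    apply norm_integral_le_of_norm_le ((intOn_aux b hb).const_mul g)
    filter_upwards with t
    have hpos : (0:ℝ) < t ^ 2 + b ^ 2 := by positivity
    have hinv : (0:ℝ) ≤ ((t ^ 2 + b ^ 2) ^ 2)⁻¹ := by positivity
    have hne : (t ^ 2 + b ^ 2) ≠ 0 := ne_of_gt hpos
    have heq : g * (t ^ 2 + b ^ 2) * ((t ^ 2 + b ^ 2) ^ 2)⁻¹ = g * (t ^ 2 + b ^ 2)⁻¹ := by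
      field_simp
    have h1 : g * (t ^ 2 - b ^ 2) * ((t ^ 2 + b ^ 2) ^ 2)⁻¹ ≤ g * (t ^ 2 + b ^ 2)⁻¹ := by
      rw [← heq]
      gcongr
      nlinarith [sq_nonneg b]
    have h2 : -(g * (t ^ 2 + b ^ 2)⁻¹) ≤ g * (t ^ 2 - b ^ 2) * ((t ^ 2 + b ^ 2) ^ 2)⁻¹ := by
      have e2 : -(g * (t ^ 2 + b ^ 2)⁻¹) = g * (-(t ^ 2 + b ^ 2)) * ((t ^ 2 + b ^ 2) ^ 2)⁻¹ := by
        rw [← heq]; ring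
      rw [e2]
      gcongr
      nlinarith [sq_nonneg t]
    have habs : |g * (t ^ 2 - b ^ 2) * ((t ^ 2 + b ^ 2) ^ 2)⁻¹| ≤ g * (t ^ 2 + b ^ 2)⁻¹ :=
      abs_le.mpr ⟨h2, h1⟩
    rw [Real.norm_eq_abs, abs_div, abs_of_nonneg (le_trans zero_le_one (hD t))]
    calc |g * (t ^ 2 - b ^ 2) * ((t ^ 2 + b ^ 2) ^ 2)⁻¹| / D t
        ≤ |g * (t ^ 2 - b ^ 2) * ((t ^ 2 + b ^ 2) ^ 2)⁻¹| / 1 :=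
          div_le_div_of_nonneg_left (abs_nonneg _) one_pos (hD t) |>.trans_eq rfl
      _ = |g * (t ^ 2 - b ^ 2) * ((t ^ 2 + b ^ 2) ^ 2)⁻¹| := div_one _
      _ ≤ g * (t ^ 2 + b ^ 2)⁻¹ := habs
  have hint : ∫ t in Set.Ioi (0 : ℝ), g * (t ^ 2 + b ^ 2)⁻¹ = g * (π / (2 * b)) := by
    rw [MeasureTheory.integral_const_mul, int_aux b hb]
  have hfinal : (1 / Real.pi) * ‖∫ t in Set.Ioi (0 : ℝ),
        (g * (t ^ 2 - b ^ 2) * (((t ^ 2 + b ^ 2) ^ 2)⁻¹)) / D t‖ ≤ g / e0 := by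
    have hPi : (0:ℝ) < Real.pi := Real.pi_pos
    have step1 : (1 / Real.pi) * ‖∫ t in Set.Ioi (0 : ℝ),
        (g * (t ^ 2 - b ^ 2) * (((t ^ 2 + b ^ 2) ^ 2)⁻¹)) / D t‖
        ≤ (1 / Real.pi) * (g * (π / (2 * b))) := by
      rw [← hint]
      exact mul_le_mul_of_nonneg_left key (by positivity)
    have step2 : (1 / Real.pi) * (g * (π / (2 * b))) = g / (2 * b) := by
      rw [div_mul_eq_mul_div, one_mul, mul_div_assoc]
      rw [div_right_comm, div_self (ne_of_gt hPi), mul_one_div]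
    have step3 : g / (2 * b) ≤ g / e0 := div_le_div_of_nonneg_left hg he hle
    linarith
  rw [abs_mul, abs_of_nonneg (by positivity : (0:ℝ) ≤ 1 / Real.pi), ← Real.norm_eq_abs]
  exact hfinal

lemma tsum_bound (V : Z3 → ℝ) (hsum : Summable (fun ℓ : Z3 => if ℓ ≠ 0 then V ℓ else 0))
    (a : Z3 → ℝ) (c : ℝ) (h : ∀ ℓ, |a ℓ| ≤ (if ℓ ≠ 0 then V ℓ else 0) * c) :
    |∑' ℓ, a ℓ| ≤ (∑' ℓ : Z3, if ℓ ≠ 0 then V ℓ else 0) * c := by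
  have hb : Summable (fun ℓ : Z3 => (if ℓ ≠ 0 then V ℓ else 0) * c) := hsum.mul_right c
  have hn : Summable (fun ℓ : Z3 => ‖a ℓ‖) :=
    Summable.of_nonneg_of_le (fun ℓ => norm_nonneg _) (fun ℓ => by simpa using h ℓ) hb
  calc |∑' ℓ, a ℓ| = ‖∑' ℓ, a ℓ‖ := (Real.norm_eq_abs _).symm
    _ ≤ ∑' ℓ, ‖a ℓ‖ := norm_tsum_le_tsum_norm hn
    _ ≤ ∑' ℓ : Z3, (if ℓ ≠ 0 then V ℓ else 0) * c :=
        Summable.tsum_le_tsum (fun ℓ => by simpa using h ℓ) hn hb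
    _ = (∑' ℓ : Z3, if ℓ ≠ 0 then V ℓ else 0) * c := tsum_mul_right


/-- Estimate for the RPA contribution (Lemma `lem:nqb_bounds`):
`|n^{RPA}(q)| ≤ C k_F⁻¹ e(q)⁻¹`, both outside and inside the Fermi ball. -/
theorem stmt18 (V : Z3 → ℝ) (hV : ∀ ℓ : Z3, 0 ≤ V ℓ)
    (hsum : Summable (fun ℓ : Z3 => if ℓ ≠ 0 then V ℓ else 0)) :
    ∃ C : ℝ, 0 < C ∧ ∀ kF : ℝ, 1 ≤ kF → ∀ q : Z3,
      (q ∉ BF kF → |nRPA kF V q| ≤ C * kF⁻¹ * (efun kF q)⁻¹) ∧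
      (q ∈ BF kF → |nRPAin kF V q| ≤ C * kF⁻¹ * (efun kF q)⁻¹) := by
  set T := ∑' ℓ : Z3, if ℓ ≠ 0 then V ℓ else 0 with hT
  have hT0 : 0 ≤ T := tsum_nonneg (fun ℓ => by split_ifs; exacts [hV ℓ, le_refl 0])
  set C := T / (2 * (2 * Real.pi) ^ 3) + 1 with hC
  have hC0 : 0 < C := by positivity
  refine ⟨C, hC0, ?_⟩
  intro kF hkF q
  have hk : (0:ℝ) < kF := lt_of_lt_of_le one_pos hkF
  have final : ∀ e : ℝ, 0 < e → T * (kF⁻¹ * ((2 * (2 * Real.pi) ^ 3)⁻¹ * e⁻¹))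
      ≤ C * kF⁻¹ * e⁻¹ := by
    intro e hepos
    have h1 : T * (kF⁻¹ * ((2 * (2 * Real.pi) ^ 3)⁻¹ * e⁻¹))
        = (T * (2 * (2 * Real.pi) ^ 3)⁻¹) * (kF⁻¹ * e⁻¹) := by ring
    have h2 : C * kF⁻¹ * e⁻¹ = C * (kF⁻¹ * e⁻¹) := by ring
    rw [h1, h2]
    apply mul_le_mul_of_nonneg_right _ (by positivity)
    rw [hC, div_eq_mul_inv]
    linarith
  constructor
  · -- outside
    intro hq
    have hmq : sInf (nsq '' (BF kF)ᶜ) ≤ nsq q := csInf_le_nsq kF q hq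
    have hE : efun kF q = nsq q - sInf (nsq '' (BF kF)ᶜ) + 1 / 2 := by
      unfold efun
      exact abs_of_pos (by linarith)
    have hEpos : 0 < efun kF q := by rw [hE]; linarith
    set c := kF⁻¹ * ((2 * (2 * Real.pi) ^ 3)⁻¹ * (efun kF q)⁻¹) with hc
    have key := tsum_bound V hsum
      (fun ℓ => if ℓ ≠ 0 ∧ q ∈ lens kF ℓ then
        (1 / Real.pi) * ∫ t in Set.Ioi (0 : ℝ),
          (gcoef kF V ℓ * (t ^ 2 - (lam ℓ q) ^ 2) * (((t ^ 2 + (lam ℓ q) ^ 2) ^ 2)⁻¹)) /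
            (1 + 2 * gcoef kF V ℓ *
              ∑' p : Z3, if p ∈ lens kF ℓ then lam ℓ p * (t ^ 2 + (lam ℓ p) ^ 2)⁻¹ else 0)
      else 0) c ?_
    · calc |nRPA kF V q| ≤ T * c := key
        _ ≤ C * kF⁻¹ * (efun kF q)⁻¹ := by rw [hc]; exact final _ hEpos
    · intro ℓ
      beta_reduce
      by_cases hcond : ℓ ≠ 0 ∧ q ∈ lens kF ℓ
      · rw [if_pos hcond, if_pos hcond.1]
        have hlow : nsq (q - ℓ) + 1 ≤ sInf (nsq '' (BF kF)ᶜ) :=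
          nsq_add_one_le_csInf kF hkF _ hcond.2.2
        have hle : efun kF q ≤ 2 * lam ℓ q := by
          unfold lam; rw [hE]; linarith
        calc _ ≤ gcoef kF V ℓ / efun kF q := per_term kF V hV hkF ℓ q _ hEpos hle
          _ = V ℓ * c := by
              rw [hc]; unfold gcoef
              rw [div_eq_mul_inv, div_eq_mul_inv]; ring
      · rw [if_neg hcond, abs_zero]
        apply mul_nonneg _ (by positivity)
        split_ifs; exacts [hV ℓ, le_refl 0]
  · -- inside
    intro hq
    have hmq : nsq q + 1 ≤ sInf (nsq '' (BF kF)ᶜ) := nsq_add_one_le_csInf kF hkF q hq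
    have hE : efun kF q = sInf (nsq '' (BF kF)ᶜ) - nsq q - 1 / 2 := by
      unfold efun
      rw [abs_of_neg (by linarith)]; ring
    have hEpos : 0 < efun kF q := by rw [hE]; linarith
    set c := kF⁻¹ * ((2 * (2 * Real.pi) ^ 3)⁻¹ * (efun kF q)⁻¹) with hc
    have key := tsum_bound V hsum
      (fun ℓ => if ℓ ≠ 0 ∧ q + ℓ ∈ lens kF ℓ then
        (1 / Real.pi) * ∫ t in Set.Ioi (0 : ℝ),
          (gcoef kF V ℓ * (t ^ 2 - (lam ℓ (q + ℓ)) ^ 2) * (((t ^ 2 + (lam ℓ (q + ℓ)) ^ 2) ^ 2)⁻¹)) /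
            (1 + 2 * gcoef kF V ℓ *
              ∑' p : Z3, if p ∈ lens kF ℓ then lam ℓ p * (t ^ 2 + (lam ℓ p) ^ 2)⁻¹ else 0)
      else 0) c ?_
    · calc |nRPAin kF V q| ≤ T * c := key
        _ ≤ C * kF⁻¹ * (efun kF q)⁻¹ := by rw [hc]; exact final _ hEpos
    · intro ℓ
      beta_reduce
      by_cases hcond : ℓ ≠ 0 ∧ q + ℓ ∈ lens kF ℓ
      · rw [if_pos hcond, if_pos hcond.1]
        have hsub : q + ℓ - ℓ = q := add_sub_cancel_right q ℓ
        have hge : sInf (nsq '' (BF kF)ᶜ) ≤ nsq (q + ℓ) := csInf_le_nsq kF (q + ℓ) hcond.2.1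
        have hle : efun kF q ≤ 2 * lam ℓ (q + ℓ) := by
          unfold lam; rw [hsub, hE]; linarith
        calc _ ≤ gcoef kF V ℓ / efun kF q := per_term kF V hV hkF ℓ (q + ℓ) _ hEpos hle
          _ = V ℓ * c := by
              rw [hc]; unfold gcoef
              rw [div_eq_mul_inv, div_eq_mul_inv]; ring
      · rw [if_neg hcond, abs_zero]
        apply mul_nonneg _ (by positivity)
        split_ifs; exacts [hV ℓ, le_refl 0]
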